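/- Let p be a prime, q = p^α a prime power, k ≥ 2 an integer, and L ⊊ {0,...,q-1} nonempty. Let F ⊆ 2^[n] be a set system such that |E| mod q ∉ L for every E ∈ F, and for any k distinct sets F_1,...,F_k ∈ F the intersection satisfies |F_1 ∩ ... ∩ F_k| mod q ∈ L. Then |F| ≤ (k-1) Σ_{j=0}^{q-1} C(n, j). -/

import Mathlib

open Polynomial in
lemma lem1 (p : ℕ) (hp : p.Prime) (α m j : ℕ) (hj : j < p ^ α) :
    (((m + p ^ α).choose j : ZMod p)) = (m.choose j : ZMod p) := by
  haveI : Fact p.Prime := ⟨hp⟩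
  have h : ((X + 1 : (ZMod p)[X]) ^ (m + p ^ α)).coeff j
      = ((X + 1 : (ZMod p)[X]) ^ m).coeff j := by
    rw [pow_add, add_pow_char_pow, one_pow, mul_add, mul_one, coeff_add,
      mul_comm, coeff_X_pow_mul']
    simp [Nat.not_le.mpr hj]
  simpa [coeff_X_add_one_pow] using h

lemma lem2 (p : ℕ) (hp : p.Prime) (α m j : ℕ) (hj : j < p ^ α) :
    ((m.choose j : ZMod p)) = (((m % p ^ α).choose j : ZMod p)) := by
  induction m using Nat.strong_induction_on with
  | _ m ih =>
    by_cases h : m < p ^ α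
    · rw [Nat.mod_eq_of_lt h]
    · push_neg at h
      have hq : 0 < p ^ α := pow_pos hp.pos α
      have h1 : m = (m - p ^ α) + p ^ α := by omega
      rw [h1, lem1 p hp α _ j hj, Nat.add_mod_right, ih _ (by omega)]

lemma lem3 (p : ℕ) (hp : p.Prime) (α : ℕ) (L : Finset ℕ) :
    ∃ c : Fin (p ^ α) → ZMod p, ∀ m : ℕ,
      ∑ j : Fin (p ^ α), c j * (m.choose (j : ℕ) : ZMod p)
        = if m % p ^ α ∈ L then 0 else 1 := by
  haveI : Fact p.Prime := ⟨hp⟩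
  set q := p ^ α with hq
  have hq0 : 0 < q := pow_pos hp.pos α
  set A : Matrix (Fin q) (Fin q) (ZMod p) := fun r j => ((r : ℕ).choose (j : ℕ) : ZMod p)
    with hA
  have hdet : A.det = 1 := by
    rw [Matrix.det_of_lowerTriangular A (fun i j h => ?_)]
    · simp [hA]
    · have : (i : ℕ) < (j : ℕ) := by exact_mod_cast OrderDual.toDual_lt_toDual.mp h
      simp [hA, Nat.choose_eq_zero_of_lt this]
  set bvec : Fin q → ZMod p := fun r => if (r : ℕ) ∈ L then 0 else 1 with hb
  refine ⟨A⁻¹.mulVec bvec, fun m => ?_⟩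
  have hmq : m % q < q := Nat.mod_lt _ hq0
  have key : ∀ j : Fin q, (m.choose (j : ℕ) : ZMod p) = A ⟨m % q, hmq⟩ j := by
    intro j
    rw [hA]
    exact lem2 p hp α m j j.isLt
  calc ∑ j : Fin q, A⁻¹.mulVec bvec j * (m.choose (j : ℕ) : ZMod p)
      = ∑ j : Fin q, A ⟨m % q, hmq⟩ j * A⁻¹.mulVec bvec j := by
        refine Finset.sum_congr rfl fun j _ => ?_
        rw [key j, mul_comm]
    _ = (A * A⁻¹).mulVec bvec ⟨m % q, hmq⟩ := by
        rw [← Matrix.mulVec_mulVec]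
        rfl
    _ = bvec ⟨m % q, hmq⟩ := by
        rw [Matrix.mul_nonsing_inv A (by rw [hdet]; exact isUnit_one), Matrix.one_mulVec]
    _ = if m % q ∈ L then 0 else 1 := rfl

section FS

variable (p n q : ℕ) (L : Finset ℕ)

def chi (S : Finset (Fin n)) : Finset (Fin n) → ZMod p := fun T => if S ⊆ T then 1 else 0

def phi (E : Finset (Fin n)) : Finset (Fin n) → ZMod p :=
  fun T => if (E ∩ T).card % q ∈ L then 0 else 1

def Sset : Finset (Finset (Fin n)) := Finset.univ.filter (fun S => S.card < q)

def Wsub : Submodule (ZMod p) (Finset (Fin n) → ZMod p) :=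
  Submodule.span (ZMod p) ↑((Sset n q).image (chi p n))

lemma powersetCard_inter (E T : Finset (Fin n)) (j : ℕ) :
    (E ∩ T).powersetCard j = (E.powersetCard j).filter (· ⊆ T) := by
  ext S
  simp only [Finset.mem_powersetCard, Finset.mem_filter, Finset.subset_inter_iff]
  tauto

lemma phi_eq (c : Fin q → ZMod p)
    (hc : ∀ m : ℕ, ∑ j : Fin q, c j * (m.choose (j : ℕ) : ZMod p)
      = if m % q ∈ L then 0 else 1) (E : Finset (Fin n)) :
    phi p n q L E = ∑ j : Fin q, ∑ S ∈ E.powersetCard (j : ℕ), c j • chi p n S := by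
  funext T
  simp only [Finset.sum_apply, Pi.smul_apply, smul_eq_mul]
  rw [phi, ← hc (E ∩ T).card]
  refine Finset.sum_congr rfl fun j _ => ?_
  rw [← Finset.mul_sum]
  congr 1
  have h1 : ((E ∩ T).card).choose (j : ℕ) = ((E.powersetCard (j:ℕ)).filter (· ⊆ T)).card := by
    rw [← powersetCard_inter, Finset.card_powersetCard]
  rw [h1]
  simp only [chi]
  push_cast
  rw [Finset.sum_boole]

lemma phi_mem (c : Fin q → ZMod p)
    (hc : ∀ m : ℕ, ∑ j : Fin q, c j * (m.choose (j : ℕ) : ZMod p)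
      = if m % q ∈ L then 0 else 1) (E : Finset (Fin n)) :
    phi p n q L E ∈ Wsub p n q := by
  rw [phi_eq p n q L c hc E]
  refine Submodule.sum_mem _ fun j _ => Submodule.sum_mem _ fun S hS => ?_
  refine Submodule.smul_mem _ _ (Submodule.subset_span ?_)
  simp only [Finset.coe_image, Set.mem_image, Finset.mem_coe]
  refine ⟨S, ?_, rfl⟩
  rw [Sset, Finset.mem_filter]
  have := (Finset.mem_powersetCard.mp hS).2
  exact ⟨Finset.mem_univ _, by rw [this]; exact j.isLt⟩

lemma Sset_card : (Sset n q).card = ∑ j ∈ Finset.range q, n.choose j := by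
  have h : Sset n q = (Finset.range q).biUnion
      (fun j => Finset.powersetCard j (Finset.univ : Finset (Fin n))) := by
    ext S
    simp [Sset, Finset.mem_powersetCard, Finset.mem_biUnion]
  rw [h, Finset.card_biUnion]
  · refine Finset.sum_congr rfl fun j _ => ?_
    rw [Finset.card_powersetCard]
    simp
  · intro i hi j hj hij
    simp only [Finset.disjoint_left, Finset.mem_powersetCard]
    rintro S ⟨-, h1⟩ ⟨-, h2⟩
    exact hij (h1 ▸ h2 ▸ rfl)

end FS

lemma finrank_W (p n q : ℕ) [Fact p.Prime] :
    Module.finrank (ZMod p) ↥(Wsub p n q) ≤ ∑ j ∈ Finset.range q, n.choose j := by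
  refine le_trans (finrank_span_finset_le_card _) ?_
  exact le_trans (Finset.card_image_le) (le_of_eq (Sset_card n q))

lemma pairwise_bound (p n q : ℕ) (L : Finset ℕ) (hp : p.Prime) (c : Fin q → ZMod p)
    (hc : ∀ m : ℕ, ∑ j : Fin q, c j * (m.choose (j : ℕ) : ZMod p)
      = if m % q ∈ L then 0 else 1)
    (𝓖 : Finset (Finset (Fin n)))
    (havoid : ∀ E ∈ 𝓖, E.card % q ∉ L)
    (hpair : ∀ E ∈ 𝓖, ∀ E' ∈ 𝓖, E ≠ E' → (E ∩ E').card % q ∈ L) :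
    𝓖.card ≤ Module.finrank (ZMod p) ↥(Wsub p n q) := by
  haveI : Fact p.Prime := ⟨hp⟩
  classical
  have hindV : LinearIndependent (ZMod p) (fun E : ↥𝓖 => phi p n q L (E : Finset (Fin n))) := by
    rw [Fintype.linearIndependent_iff]
    intro a ha E₀
    have hval := congrFun ha (E₀ : Finset (Fin n))
    rw [Finset.sum_apply] at hval
    simp only [Pi.smul_apply, smul_eq_mul, Pi.zero_apply] at hval
    have h2 : ∀ E : ↥𝓖, E ≠ E₀ →
        a E * phi p n q L (E : Finset (Fin n)) (E₀ : Finset (Fin n)) = 0 := by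
      intro E hE
      have hmem : ((E : Finset (Fin n)) ∩ (E₀ : Finset (Fin n))).card % q ∈ L :=
        hpair _ E.2 _ E₀.2 (fun h => hE (Subtype.ext h))
      simp [phi, hmem]
    rw [Fintype.sum_eq_single E₀ h2] at hval
    have h3 : phi p n q L (E₀ : Finset (Fin n)) (E₀ : Finset (Fin n)) = 1 := by
      simp [phi, Finset.inter_self, havoid _ E₀.2]
    rw [h3, mul_one] at hval
    exact hval
  have hind : LinearIndependent (ZMod p)
      (fun E : ↥𝓖 => (⟨phi p n q L (E : Finset (Fin n)), phi_mem p n q L c hc _⟩ :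
        ↥(Wsub p n q))) := by
    apply LinearIndependent.of_comp (Wsub p n q).subtype
    exact hindV
  simpa [Fintype.card_coe] using hind.fintype_card_le_finrank

lemma key_ind (p n q : ℕ) (L : Finset ℕ) (hp : p.Prime) (c : Fin q → ZMod p)
    (hc : ∀ m : ℕ, ∑ j : Fin q, c j * (m.choose (j : ℕ) : ZMod p)
      = if m % q ∈ L then 0 else 1) :
    ∀ t : ℕ, ∀ 𝓖 : Finset (Finset (Fin n)),
    (∀ E ∈ 𝓖, E.card % q ∉ L) →
    (∀ S : Finset (Finset (Fin n)), S ⊆ 𝓖 → S.card = t + 2 → (S.inf id).card % q ∈ L) →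
    𝓖.card ≤ (t + 1) * Module.finrank (ZMod p) ↥(Wsub p n q) := by
  haveI : Fact p.Prime := ⟨hp⟩
  classical
  intro t
  induction t with
  | zero =>
    intro 𝓖 havoid hint
    rw [zero_add, one_mul]
    refine pairwise_bound p n q L hp c hc 𝓖 havoid ?_
    intro E hE E' hE' hne
    have hsub : ({E, E'} : Finset (Finset (Fin n))) ⊆ 𝓖 := by
      intro x hx
      rcases Finset.mem_insert.mp hx with h | h
      · exact h ▸ hE
      · exact (Finset.mem_singleton.mp h) ▸ hE'
    have := hint {E, E'} hsub (Finset.card_pair hne)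
    simpa [Finset.inf_insert] using this
  | succ t ih =>
    intro 𝓖 havoid hint3
    set M := Module.finrank (ZMod p) ↥(Wsub p n q) with hM
    set Φ : Finset (Finset (Fin n) → ZMod p) := 𝓖.image (phi p n q L) with hΦ
    obtain ⟨b, hbsub, hbspan, hbind⟩ := exists_linearIndependent (ZMod p) (↑Φ : Set (Finset (Fin n) → ZMod p))
    have hbfin : b.Finite := Set.Finite.subset Φ.finite_toSet hbsub
    haveI : Fintype ↥b := hbfin.fintype
    have hspanle : Submodule.span (ZMod p) b ≤ Wsub p n q := by
      rw [Submodule.span_le]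
      intro v hv
      have hvΦ : v ∈ Φ := hbsub hv
      rw [Finset.mem_image] at hvΦ
      obtain ⟨E, -, rfl⟩ := hvΦ
      exact phi_mem p n q L c hc E
    have hcard_b : hbfin.toFinset.card ≤ M := by
      have h2 : Module.finrank (ZMod p) ↥(Submodule.span (ZMod p) b)
          = b.toFinset.card := finrank_span_set_eq_card hbind
      have h3 : hbfin.toFinset = b.toFinset := Set.Finite.toFinset_eq_toFinset hbfin
      rw [h3, ← h2, hM]
      exact Submodule.finrank_mono hspanle
    set f : (Finset (Fin n) → ZMod p) → Finset (Fin n) := fun v =>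
      if h : ∃ E ∈ 𝓖, phi p n q L E = v then h.choose else ∅ with hf
    have hfprop : ∀ v ∈ Φ, f v ∈ 𝓖 ∧ phi p n q L (f v) = v := by
      intro v hv
      rw [hΦ, Finset.mem_image] at hv
      obtain ⟨E, hE, hEv⟩ := hv
      have hex : ∃ E ∈ 𝓖, phi p n q L E = v := ⟨E, hE, hEv⟩
      rw [hf]
      simp only [dif_pos hex]
      exact ⟨hex.choose_spec.1, hex.choose_spec.2⟩
    set 𝓑 : Finset (Finset (Fin n)) := hbfin.toFinset.image f with h𝓑
    have h𝓑sub : 𝓑 ⊆ 𝓖 := by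
      intro E hE
      rw [h𝓑, Finset.mem_image] at hE
      obtain ⟨v, hv, rfl⟩ := hE
      exact (hfprop v (hbsub (hbfin.mem_toFinset.mp hv))).1
    have h𝓑card : 𝓑.card ≤ M := le_trans Finset.card_image_le hcard_b
    set 𝓖' := 𝓖 \ 𝓑 with h𝓖'
    have hclaim : ∀ S : Finset (Finset (Fin n)), S ⊆ 𝓖' → S.card = t + 2 →
        (S.inf id).card % q ∈ L := by
      intro S hS hScard
      by_contra hy
      set y := S.inf id with hy'
      have hSne : S.Nonempty := Finset.card_pos.mp (by omega)
      obtain ⟨E₁, hE₁⟩ := hSne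
      have hyE₁ : y ⊆ E₁ := by simpa using Finset.inf_le (f := id) hE₁
      have hphiE₁y : phi p n q L E₁ y ≠ 0 := by
        have hι : E₁ ∩ y = y := Finset.inter_eq_right.mpr hyE₁
        simp [phi, hι, hy]
      have hE₁𝓖 : E₁ ∈ 𝓖 := (Finset.mem_sdiff.mp (hS hE₁)).1
      have hφmem : phi p n q L E₁ ∈ Submodule.span (ZMod p) b := by
        rw [hbspan]
        exact Submodule.subset_span (by
          rw [hΦ]
          exact_mod_cast Finset.mem_image_of_mem _ hE₁𝓖)
      have hex : ∃ v ∈ b, v y ≠ 0 := by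
        by_contra hno
        push_neg at hno
        have hker : Submodule.span (ZMod p) b ≤
            LinearMap.ker (LinearMap.proj (R := ZMod p) (φ := fun _ : Finset (Fin n) => ZMod p) y) := by
          rw [Submodule.span_le]
          intro v hv
          simpa [LinearMap.mem_ker] using hno v hv
        exact hphiE₁y (by simpa using hker hφmem)
      obtain ⟨v, hvb, hvy⟩ := hex
      obtain ⟨hfv𝓖, hfveq⟩ := hfprop v (hbsub hvb)
      have hE𝓑 : f v ∈ 𝓑 := Finset.mem_image_of_mem f (hbfin.mem_toFinset.mpr hvb)
      have hES : f v ∉ S := fun h => (Finset.mem_sdiff.mp (hS h)).2 hE𝓑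
      have hS' : insert (f v) S ⊆ 𝓖 :=
        Finset.insert_subset hfv𝓖 (hS.trans Finset.sdiff_subset)
      have hScard' : (insert (f v) S).card = t + 1 + 2 := by
        rw [Finset.card_insert_of_notMem hES, hScard]
      have hL' := hint3 (insert (f v) S) hS' hScard'
      rw [Finset.inf_insert] at hL'
      have hz : phi p n q L (f v) y = 0 := by
        have h5 : ((f v) ∩ y).card % q ∈ L := by
          simpa [Finset.inf_eq_inter, hy'] using hL'
        simp [phi, h5]
      rw [hfveq] at hz
      exact hvy hz
    have hG'card := ih 𝓖' (fun E hE => havoid E (Finset.sdiff_subset hE)) hclaim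
    have hsplit : 𝓖.card ≤ 𝓖'.card + 𝓑.card := by
      conv_lhs => rw [← Finset.sdiff_union_of_subset h𝓑sub]
      exact Finset.card_union_le _ _
    calc 𝓖.card ≤ 𝓖'.card + 𝓑.card := hsplit
      _ ≤ (t + 1) * M + M := add_le_add hG'card h𝓑card
      _ = (t + 1 + 1) * M := by ring


/-- Theorem main3 -/
theorem stmt8 (p α n k : ℕ) (hp : p.Prime) (hα : 1 ≤ α) (q : ℕ) (hq : q = p ^ α)
    (hk : 2 ≤ k) (L : Finset ℕ) (hL : L ⊂ Finset.range q) (hLne : L.Nonempty)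
    (𝓕 : Finset (Finset (Fin n)))
    (havoid : ∀ E ∈ 𝓕, E.card % q ∉ L)
    (hint : ∀ S : Finset (Finset (Fin n)), S ⊆ 𝓕 → S.card = k → (S.inf id).card % q ∈ L) :
    𝓕.card ≤ (k - 1) * ∑ j ∈ Finset.range q, n.choose j := by
  haveI : Fact p.Prime := ⟨hp⟩
  obtain ⟨c, hc⟩ : ∃ c : Fin q → ZMod p, ∀ m : ℕ,
      ∑ j : Fin q, c j * (m.choose (j : ℕ) : ZMod p) = if m % q ∈ L then 0 else 1 := by
    subst hq; exact lem3 p hp α L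
  have hkey := key_ind p n q L hp c hc (k - 2) 𝓕 havoid ?_
  · have h1 : k - 2 + 1 = k - 1 := by omega
    rw [h1] at hkey
    exact le_trans hkey (Nat.mul_le_mul_left _ (finrank_W p n q))
  · intro S hS hScard
    exact hint S hS (by omega)
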